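/- Let p and q be probability distributions on Fin n with supp(p) ⊆ supp(q), let α > 1, and let 0 < ε < 1. Then there exists a subnormalized distribution p' with 0 ≤ p' i ≤ p i for all i and ∑ i, (p i − p' i) ≤ ε (in particular ‖p − p'‖ ≤ ε), such that D_α(p ‖ q) ≥ D_∞(p' ‖ q) − (log(1/ε))/(α−1), where D_∞(p' ‖ q) := log max_{i ∈ supp q} (p' i / q i). -/

import Mathlib

open scoped BigOperators ENNReal Classical

noncomputable section

/-- A probability distribution on a finite type. -/
def IsProb {ι : Type*} [Fintype ι] (p : ι → ℝ) : Prop :=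
  (∀ i, 0 ≤ p i) ∧ ∑ i, p i = 1

/-- Extended-real logarithm of an extended nonnegative real. -/
def elog (x : ℝ≥0∞) : EReal :=
  if x = 0 then ⊥ else if x = ⊤ then ⊤ else ((Real.log x.toReal : ℝ) : EReal)

/-- The Rényi divergence `D_α(p‖q)`, valued in the extended reals, with the
conventions `0/0 = 0` and `a/0 = ∞` for `a > 0` built into the `ℝ≥0∞`-valued
terms `p i ^ α * q i ^ (1-α)`. -/
def renyiD {ι : Type*} [Fintype ι] (α : ℝ) (p q : ι → ℝ) : EReal :=
  if α = 0 then - elog (ENNReal.ofReal (∑ i ∈ Finset.univ.filter (fun i => p i ≠ 0), q i))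
  else if α = 1 then (((∑ i, p i * (Real.log (p i) - Real.log (q i))) : ℝ) : EReal)
  else ((Real.sign α / (α - 1) : ℝ) : EReal) *
    elog (∑ i, (ENNReal.ofReal (p i)) ^ α * (ENNReal.ofReal (q i)) ^ (1 - α))

/-- Total variation distance between two vectors. -/
def tvDist {ι : Type*} [Fintype ι] (p q : ι → ℝ) : ℝ := (1 / 2) * ∑ i, |p i - q i|

/-- smoothing towards `D_∞`. For `supp p ⊆ supp q`, `α > 1` and
`0 < ε < 1`, there is a subnormalized `p'` with `0 ≤ p' ≤ p` and total mass removed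
at most `ε` such that `D_α(p‖q) ≥ D_∞(p'‖q) - log(1/ε)/(α-1)`, where
`D_∞(p'‖q) = log max_{i ∈ supp q} (p' i / q i)`. -/
theorem renyiD_smoothing_to_Dmax {n : ℕ} (p q : Fin n → ℝ)
    (hp : IsProb p) (hq : IsProb q)
    (hsupp : ∀ i, q i = 0 → p i = 0)
    (α : ℝ) (hα : 1 < α) (ε : ℝ) (hε0 : 0 < ε) (hε1 : ε < 1) :
    ∃ p' : Fin n → ℝ, (∀ i, 0 ≤ p' i) ∧ (∀ i, p' i ≤ p i) ∧
      (∑ i, (p i - p' i)) ≤ ε ∧ tvDist p p' ≤ ε ∧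
      ((Real.log (sSup {x : ℝ | ∃ i, q i ≠ 0 ∧ x = p' i / q i})
          - Real.log (1 / ε) / (α - 1) : ℝ) : EReal) ≤ renyiD α p q := by
  obtain ⟨hp0, hp1⟩ := hp
  obtain ⟨hq0, hq1⟩ := hq
  have hα0 : (0:ℝ) < α := by linarith
  have hα1 : α ≠ 1 := by linarith
  have hαm : (0:ℝ) < α - 1 := by linarith
  set S : ℝ := ∑ i, p i ^ α * q i ^ (1 - α) with hSdef
  have hterm_nonneg : ∀ i, 0 ≤ p i ^ α * q i ^ (1 - α) := fun i =>
    mul_nonneg (Real.rpow_nonneg (hp0 i) _) (Real.rpow_nonneg (hq0 i) _)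
  have hex : ∃ i, 0 < p i := by
    by_contra h
    push_neg at h
    have : ∑ i, p i ≤ 0 := Finset.sum_nonpos (fun i _ => h i)
    linarith
  obtain ⟨i0, hi0⟩ := hex
  have hqi0 : 0 < q i0 := by
    rcases lt_or_eq_of_le (hq0 i0) with h | h
    · exact h
    · exact absurd (hsupp i0 h.symm) (by linarith)
  have hSpos : 0 < S := by
    have h1 : 0 < p i0 ^ α * q i0 ^ (1 - α) :=
      mul_pos (Real.rpow_pos_of_pos hi0 _) (Real.rpow_pos_of_pos hqi0 _)
    exact Finset.sum_pos' (fun i _ => hterm_nonneg i) ⟨i0, Finset.mem_univ i0, h1⟩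
  have hSε : (0:ℝ) < S / ε := div_pos hSpos hε0
  set lam : ℝ := (S / ε) ^ ((α - 1)⁻¹) with hlamdef
  have hlampos : 0 < lam := Real.rpow_pos_of_pos hSε _
  have hlampow : lam ^ (α - 1) = S / ε := by
    rw [hlamdef, ← Real.rpow_mul hSε.le, inv_mul_cancel₀ (ne_of_gt hαm), Real.rpow_one]
  set p' : Fin n → ℝ := fun i => if p i ≤ lam * q i then p i else 0 with hp'def
  have hp'0 : ∀ i, 0 ≤ p' i := by
    intro i; simp only [hp'def]; split_ifs; exacts [hp0 i, le_refl 0]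
  have hp'le : ∀ i, p' i ≤ p i := by
    intro i; simp only [hp'def]; split_ifs; exacts [le_refl _, hp0 i]
  have hmass : ∑ i, (p i - p' i) ≤ ε := by
    have hpt : ∀ i, p i - p' i ≤ (p i ^ α * q i ^ (1 - α)) * (ε / S) := by
      intro i
      simp only [hp'def]
      split_ifs with h
      · simp only [sub_self]
        exact mul_nonneg (hterm_nonneg i) (div_pos hε0 hSpos).le
      · push_neg at h
        have hqipos : 0 < q i := by
          rcases lt_or_eq_of_le (hq0 i) with h' | h'
          · exact h'
          · exfalso
            have hpi0 : p i = 0 := hsupp i h'.symm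
            have : (0:ℝ) < p i := lt_of_le_of_lt (mul_nonneg hlampos.le (hq0 i)) h
            linarith
        have hpipos : 0 < p i := lt_of_le_of_lt (mul_nonneg hlampos.le (hq0 i)) h
        have hlt : lam < p i / q i := (lt_div_iff₀ hqipos).mpr h
        have hrp : lam ^ (α - 1) ≤ (p i / q i) ^ (α - 1) :=
          Real.rpow_le_rpow hlampos.le hlt.le hαm.le
        rw [hlampow] at hrp
        have hid : p i * ((p i / q i) ^ (α - 1)) = p i ^ α * q i ^ (1 - α) := by
          rw [Real.div_rpow (hp0 i) hqipos.le]
          have h1 : q i ^ (1 - α) = (q i ^ (α - 1))⁻¹ := by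
            rw [show (1 - α) = -(α - 1) by ring, Real.rpow_neg hqipos.le]
          have h2 : p i * p i ^ (α - 1) = p i ^ α := by
            nth_rewrite 1 [← Real.rpow_one (p i)]
            rw [← Real.rpow_add hpipos]; ring_nf
          rw [h1, ← h2]; field_simp
        have hkey : p i * (S / ε) ≤ p i ^ α * q i ^ (1 - α) := by
          calc p i * (S / ε) ≤ p i * ((p i / q i) ^ (α - 1)) :=
                mul_le_mul_of_nonneg_left hrp hpipos.le
            _ = p i ^ α * q i ^ (1 - α) := hid
        have hh : p i ≤ (p i ^ α * q i ^ (1 - α)) * (ε / S) := by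
          have h4 := mul_le_mul_of_nonneg_right hkey (div_pos hε0 hSpos).le
          have h5 : p i * (S / ε) * (ε / S) = p i := by field_simp
          rw [h5] at h4
          exact h4
        simpa using hh
    calc ∑ i, (p i - p' i) ≤ ∑ i, (p i ^ α * q i ^ (1 - α)) * (ε / S) :=
          Finset.sum_le_sum (fun i _ => hpt i)
      _ = (∑ i, p i ^ α * q i ^ (1 - α)) * (ε / S) := by rw [← Finset.sum_mul]
      _ = S * (ε / S) := by rw [← hSdef]
      _ = ε := by field_simp
  refine ⟨p', hp'0, hp'le, hmass, ?_, ?_⟩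
  · have heq : tvDist p p' = (1/2) * ∑ i, (p i - p' i) := by
      unfold tvDist
      congr 1
      exact Finset.sum_congr rfl (fun i _ => abs_of_nonneg (by linarith [hp'le i]))
    rw [heq]; linarith
  · set T : Set ℝ := {x : ℝ | ∃ i, q i ≠ 0 ∧ x = p' i / q i} with hT
    have hTfin : T.Finite := by
      apply Set.Finite.subset (Set.finite_range (fun i => p' i / q i))
      rintro x ⟨i, -, rfl⟩; exact ⟨i, rfl⟩
    have hTne : T.Nonempty := ⟨p' i0 / q i0, i0, ne_of_gt hqi0, rfl⟩
    have hbdd : BddAbove T := hTfin.bddAbove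
    have hub : ∀ x ∈ T, x ≤ lam := by
      rintro x ⟨i, hqi, rfl⟩
      have hqipos : 0 < q i := lt_of_le_of_ne (hq0 i) (Ne.symm hqi)
      simp only [hp'def]
      split_ifs with h
      · rw [div_le_iff₀ hqipos]; linarith [mul_comm lam (q i)]
      · rw [zero_div]; exact hlampos.le
    have hsup_le : sSup T ≤ lam := csSup_le hTne hub
    have hsup_pos : 0 < sSup T := by
      by_contra h
      push_neg at h
      have hz : ∀ i, p' i = 0 := by
        intro i
        rcases eq_or_ne (q i) 0 with hqi | hqi
        · have h1 := hsupp i hqi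
          have h2 := hp'le i
          have h3 := hp'0 i
          linarith
        · have hqipos : 0 < q i := lt_of_le_of_ne (hq0 i) (Ne.symm hqi)
          have hmem : p' i / q i ∈ T := ⟨i, hqi, rfl⟩
          have h1 : p' i / q i ≤ sSup T := le_csSup hbdd hmem
          have h2 : 0 ≤ p' i / q i := div_nonneg (hp'0 i) hqipos.le
          have h3 : p' i / q i = 0 := le_antisymm (by linarith) h2
          field_simp at h3
          simpa using h3
      have h1 : ∑ i, (p i - p' i) = 1 := by
        simp only [hz, sub_zero]; exact hp1
      linarith
    have hsum : (∑ i, (ENNReal.ofReal (p i)) ^ α * (ENNReal.ofReal (q i)) ^ (1 - α))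
        = ENNReal.ofReal S := by
      rw [hSdef, ENNReal.ofReal_sum_of_nonneg (fun i _ => hterm_nonneg i)]
      apply Finset.sum_congr rfl
      intro i _
      rcases eq_or_ne (q i) 0 with hqi | hqi
      · have hpi := hsupp i hqi
        rw [hpi, hqi]
        simp [Real.zero_rpow (ne_of_gt hα0), ENNReal.zero_rpow_of_pos hα0]
      · have hqipos : 0 < q i := lt_of_le_of_ne (hq0 i) (Ne.symm hqi)
        rw [ENNReal.ofReal_rpow_of_nonneg (hp0 i) hα0.le,
            ENNReal.ofReal_rpow_of_pos hqipos,
            ← ENNReal.ofReal_mul (Real.rpow_nonneg (hp0 i) _)]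
    have helog : elog (ENNReal.ofReal S) = ((Real.log S : ℝ) : EReal) := by
      have hne0 : ENNReal.ofReal S ≠ 0 := by
        simp only [ne_eq, ENNReal.ofReal_eq_zero, not_le]
        exact hSpos
      unfold elog
      rw [if_neg hne0, if_neg ENNReal.ofReal_ne_top, ENNReal.toReal_ofReal hSpos.le]
    have hren : renyiD α p q = (((1 / (α - 1)) * Real.log S : ℝ) : EReal) := by
      unfold renyiD
      rw [if_neg (ne_of_gt hα0), if_neg hα1, hsum, helog,
          Real.sign_of_pos hα0, ← EReal.coe_mul]
    rw [hren, EReal.coe_le_coe_iff]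
    have hloglam : Real.log lam = (α - 1)⁻¹ * (Real.log S - Real.log ε) := by
      rw [hlamdef, Real.log_rpow hSε, Real.log_div (ne_of_gt hSpos) (ne_of_gt hε0)]
    have hlog1ε : Real.log (1 / ε) = - Real.log ε := by
      rw [one_div, Real.log_inv]
    have hle : Real.log (sSup T) ≤ Real.log lam := Real.log_le_log hsup_pos hsup_le
    rw [hloglam] at hle
    rw [hlog1ε, div_eq_mul_inv]
    ring_nf at hle ⊢
    linarith


end
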